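/- In R = MvPowerSeries (Fin m) ℚ, the power series Td · (Σ_{r=1}^m (−1)^r · r · ch_r) agrees in total degree ≤ m with −e_{m−1} + (m/2) · e_m. -/

import Mathlib

open Finset

noncomputable section

/-- The element of `MvPowerSeries (Fin m) ℚ` obtained by substituting the variable `X j`
into a one-variable formal power series `f`. -/
def substAt {m : ℕ} (j : Fin m) (f : PowerSeries ℚ) : MvPowerSeries (Fin m) ℚ :=
  fun n => if n.support ⊆ {j} then PowerSeries.coeff (R := ℚ) (n j) f else 0

/-- The one-variable power series `exp (−X) = Σ_{n ≥ 0} (−X)^n / n!`. -/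
def expNeg : PowerSeries ℚ := PowerSeries.mk fun n => (-1) ^ n / n.factorial

/-- `ch m r = Σ_{S ⊆ Fin m, |S| = r} ∏_{j ∈ S} exp (−X j)`, the `r`-th Chern character
term of the exterior powers, written in Chern roots. -/
def ch (m : ℕ) (r : ℕ) : MvPowerSeries (Fin m) ℚ :=
  ∑ S ∈ Finset.powersetCard r (Finset.univ : Finset (Fin m)),
    ∏ j ∈ S, substAt j expNeg

/-- `esymm m k = Σ_{S ⊆ Fin m, |S| = k} ∏_{j ∈ S} X j`, the `k`-th elementary symmetric
polynomial of the variables, as a multivariate power series. -/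
def esymm (m : ℕ) (k : ℕ) : MvPowerSeries (Fin m) ℚ :=
  ∑ S ∈ Finset.powersetCard k (Finset.univ : Finset (Fin m)),
    ∏ j ∈ S, MvPowerSeries.X j

/-- The Todd class `Td = ∏_{j=1}^m φ(X_j)` written in Chern roots, where `φ` is the
Todd series `X/(1 − e^{−X})`. -/
def Td (m : ℕ) (φ : PowerSeries ℚ) : MvPowerSeries (Fin m) ℚ :=
  ∏ j : Fin m, substAt j φ

/-- `Td′ = Σ_{j=1}^m φ′(X_j) · ∏_{k ≠ j} φ(X_k)`, the class
`Td′(A) = ∂/∂t Td(A + t·Id)|_{t=0}` written in Chern roots. -/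
def Td' (m : ℕ) (φ : PowerSeries ℚ) : MvPowerSeries (Fin m) ℚ :=
  ∑ j : Fin m, substAt j (PowerSeries.derivative (R := ℚ) φ) *
    ∏ k ∈ Finset.univ.erase j, substAt k φ

/-- Two multivariate power series agree in total degree `≤ p`: their coefficients at every
multi-exponent of total degree `≤ p` coincide. -/
def AgreeUpTo (m p : ℕ) (F G : MvPowerSeries (Fin m) ℚ) : Prop :=
  ∀ n : Fin m →₀ ℕ, (∑ j, n j) ≤ p → MvPowerSeries.coeff (R := ℚ) n F = MvPowerSeries.coeff (R := ℚ) n G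

/-- Two multivariate power series agree in total degree `p`: their coefficients at every
multi-exponent of total degree `p` coincide. -/
def AgreeAt (m p : ℕ) (F G : MvPowerSeries (Fin m) ℚ) : Prop :=
  ∀ n : Fin m →₀ ℕ, (∑ j, n j) = p → MvPowerSeries.coeff (R := ℚ) n F = MvPowerSeries.coeff (R := ℚ) n G

/-! ### Auxiliary lemmas about `substAt` -/

section SubstAt

variable {m : ℕ}

lemma substAt_coeff (j : Fin m) (f : PowerSeries ℚ) (n : Fin m →₀ ℕ) :
    MvPowerSeries.coeff (R := ℚ) n (substAt j f) =
      if n.support ⊆ {j} then PowerSeries.coeff (R := ℚ) (n j) f else 0 := rfl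

lemma substAt_add (j : Fin m) (f g : PowerSeries ℚ) :
    substAt j (f + g) = substAt j f + substAt j g := by
  ext n
  rw [map_add, substAt_coeff, substAt_coeff, substAt_coeff, map_add]
  split_ifs <;> ring

lemma substAt_neg (j : Fin m) (f : PowerSeries ℚ) :
    substAt j (-f) = -(substAt j f) := by
  ext n
  rw [map_neg, substAt_coeff, substAt_coeff, map_neg]
  split_ifs <;> ring

lemma substAt_sub (j : Fin m) (f g : PowerSeries ℚ) :
    substAt j (f - g) = substAt j f - substAt j g := by
  rw [sub_eq_add_neg, substAt_add, substAt_neg, ← sub_eq_add_neg]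

lemma substAt_C (j : Fin m) (a : ℚ) :
    substAt j (PowerSeries.C (R := ℚ) a) = MvPowerSeries.C (σ := Fin m) (R := ℚ) a := by
  ext n
  rw [substAt_coeff, MvPowerSeries.coeff_C, PowerSeries.coeff_C]
  by_cases h : n = 0
  · subst h; simp
  · rw [if_neg h]
    split_ifs with h1 h2
    · exfalso
      apply h
      have := Finsupp.support_subset_singleton.mp h1
      rw [this, h2, Finsupp.single_zero]
    · rfl
    · rfl

lemma substAt_one (j : Fin m) : substAt j (1 : PowerSeries ℚ) = 1 := by
  have : (1 : PowerSeries ℚ) = PowerSeries.C (R := ℚ) 1 := by simp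
  rw [this, substAt_C, map_one]

lemma substAt_X (j : Fin m) : substAt j (PowerSeries.X) = MvPowerSeries.X j := by
  ext n
  rw [substAt_coeff, MvPowerSeries.coeff_X, PowerSeries.coeff_X]
  by_cases h : n = Finsupp.single j 1
  · subst h
    rw [if_pos rfl, if_pos Finsupp.support_single_subset, if_pos (Finsupp.single_eq_same)]
  · rw [if_neg h]
    split_ifs with h1 h2
    · exfalso
      apply h
      have := Finsupp.support_subset_singleton.mp h1
      rw [this, h2]
    · rfl
    · rfl

lemma eq_single_of_add_eq_single {j : Fin m} {a b : Fin m →₀ ℕ} {c : ℕ}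
    (h : a + b = Finsupp.single j c) :
    a = Finsupp.single j (a j) ∧ b = Finsupp.single j (b j) ∧ a j + b j = c := by
  have hk : ∀ k, a k + b k = Finsupp.single j c k := fun k => by
    rw [← Finsupp.add_apply, h]
  have ha : ∀ k, k ≠ j → a k = 0 ∧ b k = 0 := by
    intro k hkj
    have := hk k
    rw [Finsupp.single_eq_of_ne' (Ne.symm hkj)] at this
    omega
  refine ⟨?_, ?_, ?_⟩
  · ext k
    rcases eq_or_ne k j with rfl | hkj
    · simp
    · rw [Finsupp.single_eq_of_ne' (Ne.symm hkj)]
      exact (ha k hkj).1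
  · ext k
    rcases eq_or_ne k j with rfl | hkj
    · simp
    · rw [Finsupp.single_eq_of_ne' (Ne.symm hkj)]
      exact (ha k hkj).2
  · have := hk j
    rwa [Finsupp.single_eq_same] at this

lemma substAt_mul (j : Fin m) (f g : PowerSeries ℚ) :
    substAt j (f * g) = substAt j f * substAt j g := by
  classical
  ext n
  rw [MvPowerSeries.coeff_mul]
  by_cases h : n.support ⊆ {j}
  · rw [substAt_coeff, if_pos h, PowerSeries.coeff_mul]
    have hn : n = Finsupp.single j (n j) := Finsupp.support_subset_singleton.mp h
    refine Finset.sum_nbij' (fun q => (Finsupp.single j q.1, Finsupp.single j q.2))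
      (fun p => (p.1 j, p.2 j)) ?_ ?_ ?_ ?_ ?_
    · rintro ⟨x, y⟩ hq
      rw [Finset.HasAntidiagonal.mem_antidiagonal] at hq
      rw [Finset.HasAntidiagonal.mem_antidiagonal, ← Finsupp.single_add, hq, ← hn]
    · rintro ⟨a, b⟩ hp
      rw [Finset.HasAntidiagonal.mem_antidiagonal] at hp
      rw [hn] at hp
      rw [Finset.HasAntidiagonal.mem_antidiagonal]
      exact (eq_single_of_add_eq_single hp).2.2
    · rintro ⟨x, y⟩ _
      simp
    · rintro ⟨a, b⟩ hp
      rw [Finset.HasAntidiagonal.mem_antidiagonal] at hp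
      rw [hn] at hp
      obtain ⟨h1, h2, _⟩ := eq_single_of_add_eq_single hp
      simp only [Prod.mk.injEq]
      exact ⟨h1.symm, h2.symm⟩
    · rintro ⟨x, y⟩ _
      rw [substAt_coeff, substAt_coeff, if_pos Finsupp.support_single_subset,
        if_pos Finsupp.support_single_subset, Finsupp.single_eq_same, Finsupp.single_eq_same]
  · rw [substAt_coeff, if_neg h]
    symm
    apply Finset.sum_eq_zero
    rintro ⟨a, b⟩ hp
    rw [Finset.HasAntidiagonal.mem_antidiagonal] at hp
    obtain ⟨k, hkmem, hkj⟩ := Finset.not_subset.mp h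
    rw [Finsupp.mem_support_iff] at hkmem
    have hab : a k + b k = n k := by rw [← Finsupp.add_apply, hp]
    rcases Nat.eq_zero_or_pos (a k) with hak | hak
    · have hbk : b k ≠ 0 := by omega
      have hb : ¬ b.support ⊆ {j} := fun hsub => hkj (hsub (Finsupp.mem_support_iff.mpr hbk))
      rw [substAt_coeff j g b, if_neg hb, mul_zero]
    · have ha : ¬ a.support ⊆ {j} := fun hsub =>
        hkj (hsub (Finsupp.mem_support_iff.mpr (by omega)))
      rw [substAt_coeff j f a, if_neg ha, zero_mul]

end SubstAt

/-! ### Monomial and degree lemmas -/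

section Degree

variable {m : ℕ}

lemma prod_X_monomial (s : Finset (Fin m)) :
    (∏ k ∈ s, MvPowerSeries.X k : MvPowerSeries (Fin m) ℚ) =
      MvPowerSeries.monomial (R := ℚ) (∑ k ∈ s, Finsupp.single k 1) 1 := by
  classical
  induction s using Finset.induction with
  | empty => simp
  | insert _ _ h ih =>
    rw [Finset.prod_insert h, ih, Finset.sum_insert h, MvPowerSeries.X,
      MvPowerSeries.monomial_mul_monomial, one_mul]

lemma sum_single_apply (k : Fin m) (c : ℕ) :
    (∑ l : Fin m, Finsupp.single k c l) = c := by
  rw [Finset.sum_eq_single_of_mem k (Finset.mem_univ k)]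
  · simp
  · intro l _ hl
    exact Finsupp.single_eq_of_ne' (Ne.symm hl)

lemma coeff_vanish {m : ℕ} (hm : 0 < m) (j : Fin m) (ψ : PowerSeries ℚ)
    (h0 : PowerSeries.coeff (R := ℚ) 0 ψ = 0) (h1 : PowerSeries.coeff (R := ℚ) 1 ψ = 0)
    (n : Fin m →₀ ℕ) (hn : (∑ l, n l) ≤ m) :
    MvPowerSeries.coeff (R := ℚ) n
      (substAt j ψ * ∏ k ∈ Finset.univ.erase j, MvPowerSeries.X k) = 0 := by
  classical
  rw [prod_X_monomial, MvPowerSeries.coeff_mul]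
  apply Finset.sum_eq_zero
  rintro ⟨a, b⟩ hp
  rw [Finset.HasAntidiagonal.mem_antidiagonal] at hp
  rw [MvPowerSeries.coeff_monomial]
  by_cases hb : b = ∑ k ∈ Finset.univ.erase j, Finsupp.single k 1
  swap
  · rw [if_neg hb, mul_zero]
  rw [if_pos hb, mul_one, substAt_coeff]
  by_cases ha : a.support ⊆ {j}
  swap
  · rw [if_neg ha]
  rw [if_pos ha]
  have hsa : (∑ l, a l) = a j := by
    conv_lhs => rw [Finsupp.support_subset_singleton.mp ha]
    exact sum_single_apply j (a j)
  have hsb : (∑ l, b l) = m - 1 := by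
    rw [hb]
    have : ∀ l : Fin m, ((∑ k ∈ Finset.univ.erase j, Finsupp.single k 1 : Fin m →₀ ℕ)) l
        = ∑ k ∈ Finset.univ.erase j, (Finsupp.single k 1 : Fin m →₀ ℕ) l := by
      intro l
      exact Finset.sum_apply' l
    rw [Finset.sum_congr rfl fun l _ => this l, Finset.sum_comm]
    rw [Finset.sum_congr rfl fun k _ => sum_single_apply k 1]
    rw [Finset.sum_const, Finset.card_erase_of_mem (Finset.mem_univ j), Finset.card_univ,
      Fintype.card_fin, smul_eq_mul, mul_one]
  have hsn : (∑ l, n l) = (∑ l, a l) + (∑ l, b l) := by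
    rw [← Finset.sum_add_distrib]
    refine Finset.sum_congr rfl fun l _ => ?_
    rw [← hp, Finsupp.add_apply]
  have haj : a j ≤ 1 := by omega
  interval_cases h : a j
  · rw [h0]
  · rw [h1]

end Degree

/-! ### Elementary symmetric function lemmas -/

section Esymm

lemma sum_prod_erase_X (m : ℕ) (hm : 0 < m) :
    (∑ j : Fin m, ∏ k ∈ Finset.univ.erase j, MvPowerSeries.X k : MvPowerSeries (Fin m) ℚ)
      = esymm m (m - 1) := by
  classical
  have himg : Finset.powersetCard (m - 1) (Finset.univ : Finset (Fin m)) =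
      Finset.image (fun j => Finset.univ.erase j) Finset.univ := by
    ext S
    simp only [Finset.mem_powersetCard, Finset.mem_image, Finset.mem_univ, true_and]
    constructor
    · rintro ⟨hS, hcard⟩
      have hc : (Finset.univ \ S).card = 1 := by
        rw [Finset.card_sdiff_of_subset hS, Finset.card_univ, Fintype.card_fin, hcard]
        omega
      obtain ⟨j, hj⟩ := Finset.card_eq_one.mp hc
      refine ⟨j, ?_⟩
      rw [Finset.erase_eq, ← hj, Finset.sdiff_sdiff_eq_self (Finset.subset_univ S)]
    · rintro ⟨j, rfl⟩
      exact ⟨Finset.subset_univ _, by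
        rw [Finset.card_erase_of_mem (Finset.mem_univ j), Finset.card_univ, Fintype.card_fin]⟩
  rw [esymm, himg, Finset.sum_image]
  intro x _ y _ hxy
  by_contra hne
  have hx : x ∈ Finset.univ.erase y := Finset.mem_erase.mpr ⟨hne, Finset.mem_univ x⟩
  rw [← show Finset.univ.erase x = Finset.univ.erase y from hxy] at hx
  exact (Finset.notMem_erase x Finset.univ) hx

lemma esymm_top (m : ℕ) :
    esymm m m = ∏ k : Fin m, MvPowerSeries.X k := by
  rw [esymm]
  have : Finset.powersetCard m (Finset.univ : Finset (Fin m)) = {Finset.univ} := by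
    ext S
    simp only [Finset.mem_powersetCard, Finset.mem_singleton]
    constructor
    · rintro ⟨-, hc⟩
      exact Finset.eq_univ_of_card S (by rw [hc, Fintype.card_fin])
    · rintro rfl
      exact ⟨Finset.subset_univ _, by rw [Finset.card_univ, Fintype.card_fin]⟩
  rw [this, Finset.sum_singleton]

end Esymm

/-! ### The combinatorial identity -/

lemma weighted_ch_eq (m : ℕ) :
    (∑ r ∈ Finset.Icc 1 m,
        (-1 : MvPowerSeries (Fin m) ℚ) ^ r * (r : MvPowerSeries (Fin m) ℚ) * ch m r)
      = ∑ j : Fin m, (-(substAt j expNeg)) *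
          ∏ k ∈ Finset.univ.erase j, (1 - substAt k expNeg) := by
  classical
  set E : Fin m → MvPowerSeries (Fin m) ℚ := fun k => substAt k expNeg with hE
  set g : Finset (Fin m) → MvPowerSeries (Fin m) ℚ :=
    fun T => (-1) ^ T.card * ∏ k ∈ T, E k with hg
  have step1 : ∀ j : Fin m, (-(E j)) * ∏ k ∈ Finset.univ.erase j, (1 - E k)
      = ∑ t ∈ (Finset.univ.erase j).powerset, g (insert j t) := by
    intro j
    rw [Finset.prod_sub (fun _ => (1 : MvPowerSeries (Fin m) ℚ)) E, Finset.mul_sum]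
    refine Finset.sum_congr rfl fun t ht => ?_
    have hjt : j ∉ t := fun hjt =>
      (Finset.notMem_erase j Finset.univ) ((Finset.mem_powerset.mp ht) hjt)
    rw [hg]
    simp only [Finset.card_insert_of_notMem hjt, Finset.prod_insert hjt,
      Finset.prod_const_one]
    ring
  have step2 : ∀ j : Fin m, (∑ t ∈ (Finset.univ.erase j).powerset, g (insert j t))
      = ∑ T ∈ (Finset.univ : Finset (Fin m)).powerset, (if j ∈ T then g T else 0) := by
    intro j
    have h := Finset.sum_powerset_insert (Finset.notMem_erase j Finset.univ)
      (fun T => if j ∈ T then g T else 0)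
    rw [Finset.insert_erase (Finset.mem_univ j)] at h
    symm
    rw [h, Finset.sum_eq_zero (fun t ht => if_neg fun hjt =>
      (Finset.notMem_erase j Finset.univ) ((Finset.mem_powerset.mp ht) hjt)), zero_add]
    exact Finset.sum_congr rfl fun t ht => if_pos (Finset.mem_insert_self j t)
  symm
  calc ∑ j : Fin m, (-(E j)) * ∏ k ∈ Finset.univ.erase j, (1 - E k)
      = ∑ j : Fin m, ∑ T ∈ (Finset.univ : Finset (Fin m)).powerset,
          (if j ∈ T then g T else 0) := by
        exact Finset.sum_congr rfl fun j _ => (step1 j).trans (step2 j)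
    _ = ∑ T ∈ (Finset.univ : Finset (Fin m)).powerset, ∑ j : Fin m,
          (if j ∈ T then g T else 0) := Finset.sum_comm
    _ = ∑ T ∈ (Finset.univ : Finset (Fin m)).powerset, T.card • g T := by
        refine Finset.sum_congr rfl fun T _ => ?_
        rw [Finset.sum_ite_mem, Finset.univ_inter, Finset.sum_const]
    _ = ∑ r ∈ Finset.range (m + 1), ∑ T ∈ Finset.powersetCard r Finset.univ,
          T.card • g T := by
        rw [Finset.powerset_card_disjiUnion]
        exact (Finset.sum_disjiUnion _ _ _).trans (by rw [Finset.card_univ, Fintype.card_fin])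
    _ = ∑ r ∈ Finset.range (m + 1),
          (-1 : MvPowerSeries (Fin m) ℚ) ^ r * (r : MvPowerSeries (Fin m) ℚ) * ch m r := by
        refine Finset.sum_congr rfl fun r _ => ?_
        rw [ch, Finset.mul_sum]
        refine Finset.sum_congr rfl fun T hT => ?_
        have hc : T.card = r := (Finset.mem_powersetCard.mp hT).2
        rw [hg]
        simp only [hc, nsmul_eq_mul]
        ring
    _ = ∑ r ∈ Finset.Icc 1 m,
          (-1 : MvPowerSeries (Fin m) ℚ) ^ r * (r : MvPowerSeries (Fin m) ℚ) * ch m r := by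
        have hrange : Finset.range (m + 1) = insert 0 (Finset.Icc 1 m) := by
          ext x
          simp only [Finset.mem_range, Finset.mem_insert, Finset.mem_Icc]
          omega
        rw [hrange, Finset.sum_insert (by simp)]
        simp

/-- `Td · (Σ_{r=1}^m (−1)^r · r · ch_r)` agrees in total degree `≤ m` with
`−e_{m−1} + (m/2) · e_m`.  (The term `e_{m−1}` presupposes `1 ≤ m`.) -/
theorem td_mul_weighted_sum_ch (m : ℕ) (hm : 0 < m) (φ : PowerSeries ℚ)
    (hφ : φ * (1 - expNeg) = PowerSeries.X) :
    AgreeUpTo m m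
      (Td m φ * ∑ r ∈ Finset.Icc 1 m,
        (-1 : MvPowerSeries (Fin m) ℚ) ^ r * (r : MvPowerSeries (Fin m) ℚ) * ch m r)
      (-(esymm m (m - 1)) + MvPowerSeries.C (σ := Fin m) (R := ℚ) ((m : ℚ) / 2) * esymm m m) := by
  classical
  -- coefficients of φ in low degrees
  have hexp : ∀ i : ℕ, PowerSeries.coeff (R := ℚ) i expNeg = (-1) ^ i / i.factorial := fun i => by
    simp [expNeg]
  have hφ0 : PowerSeries.coeff (R := ℚ) 0 φ = 1 := by
    have h := congrArg (PowerSeries.coeff (R := ℚ) 1) hφ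
    rw [PowerSeries.coeff_mul, Finset.Nat.sum_antidiagonal_eq_sum_range_succ_mk] at h
    simp [Finset.sum_range_succ, hexp, PowerSeries.coeff_one, PowerSeries.coeff_X] at h
    rw [PowerSeries.coeff_zero_eq_constantCoeff]
    linarith
  have hφ0' : PowerSeries.constantCoeff (R := ℚ) φ = 1 := by
    rwa [← PowerSeries.coeff_zero_eq_constantCoeff]
  have hφ1 : PowerSeries.coeff (R := ℚ) 1 φ = 1 / 2 := by
    have h := congrArg (PowerSeries.coeff (R := ℚ) 2) hφ
    rw [PowerSeries.coeff_mul, Finset.Nat.sum_antidiagonal_eq_sum_range_succ_mk] at h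
    simp [Finset.sum_range_succ, hexp, PowerSeries.coeff_one, PowerSeries.coeff_X, hφ0, hφ0',
      Nat.factorial] at h
    linarith
  -- the corrector series ψ vanishing in degrees ≤ 1
  set ψ : PowerSeries ℚ := (PowerSeries.X - φ) -
    (PowerSeries.C (R := ℚ) (-1) + PowerSeries.C (R := ℚ) (1 / 2) * PowerSeries.X) with hψdef
  have hψ0 : PowerSeries.coeff (R := ℚ) 0 ψ = 0 := by
    rw [hψdef]
    simp [hφ0, hφ0', PowerSeries.coeff_X, PowerSeries.coeff_C, PowerSeries.coeff_C_mul]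
  have hψ1 : PowerSeries.coeff (R := ℚ) 1 ψ = 0 := by
    rw [hψdef]
    simp only [map_sub, map_add, PowerSeries.coeff_C_mul, hφ1, PowerSeries.coeff_X,
      PowerSeries.coeff_C]
    norm_num
  -- key one-variable identities transported by substAt
  have hkey : ∀ k : Fin m, substAt k φ * (1 - substAt k expNeg) = MvPowerSeries.X k := by
    intro k
    have h := congrArg (substAt k) hφ
    rwa [substAt_mul, substAt_sub, substAt_one, substAt_X] at h
  have hXφ : PowerSeries.X - φ = -(φ * expNeg) := by linear_combination -hφ
  -- the main product identity
  have hmain : Td m φ * (∑ r ∈ Finset.Icc 1 m,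
        (-1 : MvPowerSeries (Fin m) ℚ) ^ r * (r : MvPowerSeries (Fin m) ℚ) * ch m r)
      = ∑ j : Fin m, substAt j (PowerSeries.X - φ) *
          ∏ k ∈ Finset.univ.erase j, MvPowerSeries.X k := by
    rw [weighted_ch_eq, Finset.mul_sum]
    refine Finset.sum_congr rfl fun j _ => ?_
    have h1 : substAt j (PowerSeries.X - φ) = substAt j φ * (-(substAt j expNeg)) := by
      rw [hXφ, substAt_neg, substAt_mul]
      ring
    rw [h1, Finset.prod_congr rfl (fun k (_ : k ∈ Finset.univ.erase j) => (hkey k).symm),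
      Finset.prod_mul_distrib, Td,
      ← Finset.mul_prod_erase Finset.univ (fun k => substAt k φ) (Finset.mem_univ j)]
    ring
  -- decomposition of X − φ
  have hdecomp : ∀ j : Fin m, substAt j (PowerSeries.X - φ)
      = substAt j ψ + (MvPowerSeries.C (σ := Fin m) (R := ℚ) (-1) +
          MvPowerSeries.C (σ := Fin m) (R := ℚ) (1 / 2) * MvPowerSeries.X j) := by
    intro j
    have h : PowerSeries.X - φ = ψ +
        (PowerSeries.C (R := ℚ) (-1) + PowerSeries.C (R := ℚ) (1 / 2) * PowerSeries.X) := by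
      rw [hψdef]; ring
    rw [h, substAt_add, substAt_add, substAt_C, substAt_mul, substAt_C, substAt_X]
  -- the closed form of the corrected sum
  have hfinal : (∑ j : Fin m, (MvPowerSeries.C (σ := Fin m) (R := ℚ) (-1) +
        MvPowerSeries.C (σ := Fin m) (R := ℚ) (1 / 2) * MvPowerSeries.X j) *
        ∏ k ∈ Finset.univ.erase j, MvPowerSeries.X k)
      = -(esymm m (m - 1)) + MvPowerSeries.C (σ := Fin m) (R := ℚ) ((m : ℚ) / 2) * esymm m m := by
    have e2 : ∀ j : Fin m, MvPowerSeries.X j *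
        ∏ k ∈ Finset.univ.erase j, (MvPowerSeries.X k : MvPowerSeries (Fin m) ℚ)
        = ∏ k : Fin m, MvPowerSeries.X k := fun j =>
      Finset.mul_prod_erase Finset.univ _ (Finset.mem_univ j)
    calc ∑ j : Fin m, (MvPowerSeries.C (σ := Fin m) (R := ℚ) (-1) +
          MvPowerSeries.C (σ := Fin m) (R := ℚ) (1 / 2) * MvPowerSeries.X j) *
          ∏ k ∈ Finset.univ.erase j, MvPowerSeries.X k
        = ∑ j : Fin m, (MvPowerSeries.C (σ := Fin m) (R := ℚ) (-1) *
            ∏ k ∈ Finset.univ.erase j, MvPowerSeries.X k +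
            MvPowerSeries.C (σ := Fin m) (R := ℚ) (1 / 2) * (MvPowerSeries.X j *
            ∏ k ∈ Finset.univ.erase j, MvPowerSeries.X k)) :=
          Finset.sum_congr rfl fun j _ => by ring
      _ = MvPowerSeries.C (σ := Fin m) (R := ℚ) (-1) *
            (∑ j : Fin m, ∏ k ∈ Finset.univ.erase j, MvPowerSeries.X k) +
            MvPowerSeries.C (σ := Fin m) (R := ℚ) (1 / 2) * (∑ j : Fin m, MvPowerSeries.X j *
            ∏ k ∈ Finset.univ.erase j, MvPowerSeries.X k) := by
          rw [Finset.sum_add_distrib, Finset.mul_sum, Finset.mul_sum]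
      _ = MvPowerSeries.C (σ := Fin m) (R := ℚ) (-1) * esymm m (m - 1) +
            MvPowerSeries.C (σ := Fin m) (R := ℚ) (1 / 2) * (m • ∏ k : Fin m, MvPowerSeries.X k) := by
          rw [sum_prod_erase_X m hm, Finset.sum_congr rfl fun j _ => e2 j,
            Finset.sum_const, Finset.card_univ, Fintype.card_fin]
      _ = -(esymm m (m - 1)) + MvPowerSeries.C (σ := Fin m) (R := ℚ) ((m : ℚ) / 2) * esymm m m := by
          rw [esymm_top, nsmul_eq_mul]
          have hC1 : MvPowerSeries.C (σ := Fin m) (R := ℚ) (-1) = -1 := by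
            rw [map_neg, map_one]
          have hCm : ((m : ℕ) : MvPowerSeries (Fin m) ℚ)
              = MvPowerSeries.C (σ := Fin m) (R := ℚ) (m : ℚ) := (map_natCast _ m).symm
          rw [hC1, hCm, ← mul_assoc, ← map_mul]
          have : (1 : ℚ) / 2 * m = (m : ℚ) / 2 := by ring
          rw [this]
          ring
  -- assemble
  intro n hn
  rw [hmain]
  have hsplit : (∑ j : Fin m, substAt j (PowerSeries.X - φ) *
        ∏ k ∈ Finset.univ.erase j, MvPowerSeries.X k)
      = (∑ j : Fin m, substAt j ψ * ∏ k ∈ Finset.univ.erase j, MvPowerSeries.X k) +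
        (∑ j : Fin m, (MvPowerSeries.C (σ := Fin m) (R := ℚ) (-1) +
          MvPowerSeries.C (σ := Fin m) (R := ℚ) (1 / 2) * MvPowerSeries.X j) *
          ∏ k ∈ Finset.univ.erase j, MvPowerSeries.X k) := by
    rw [← Finset.sum_add_distrib]
    exact Finset.sum_congr rfl fun j _ => by rw [hdecomp j, add_mul]
  rw [hsplit, map_add]
  have h0 : MvPowerSeries.coeff (R := ℚ) n
      (∑ j : Fin m, substAt j ψ * ∏ k ∈ Finset.univ.erase j, MvPowerSeries.X k) = 0 := by
    rw [map_sum]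
    exact Finset.sum_eq_zero fun j _ => coeff_vanish hm j ψ hψ0 hψ1 n hn
  rw [h0, zero_add, hfinal]
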